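/- For all x ∈ ℝ, |sinc'(x)| ≤ 1/2, where sinc(x) = sin(x)/x (with sinc(0)=1) and sinc'(x) = cos(x)/x − sin(x)/x² for x ≠ 0, sinc'(0) = 0. -/

import Mathlib

/-- The cardinal sine `sinc x = sin x / x`, extended by `sinc 0 = 1`. -/
noncomputable def sinc (x : ℝ) : ℝ := if x = 0 then 1 else Real.sin x / x

/-- Generic helper: a differentiable function vanishing at 0 with nonnegative
derivative on `[0, ∞)` is nonnegative on `[0, ∞)`. -/
lemma nonneg_of_deriv_nonneg {f f' : ℝ → ℝ} (hf : ∀ x, HasDerivAt f (f' x) x)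
    (h0 : f 0 = 0) (hd : ∀ x, 0 ≤ x → 0 ≤ f' x) {x : ℝ} (hx : 0 ≤ x) : 0 ≤ f x := by
  have hmono : MonotoneOn f (Set.Ici (0:ℝ)) := by
    apply monotoneOn_of_deriv_nonneg (convex_Ici 0)
    · exact (Differentiable.continuous fun y => (hf y).differentiableAt).continuousOn
    · intro y hy
      exact ((hf y).differentiableAt).differentiableWithinAt
    · intro y hy
      rw [interior_Ici] at hy
      rw [(hf y).deriv]
      exact hd y hy.le
  have := hmono (Set.self_mem_Ici) hx hx
  rwa [h0] at this

lemma key_of_nonneg {x : ℝ} (hx : 0 ≤ x) : |x * Real.cos x - Real.sin x| ≤ x ^ 2 / 2 := by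
  have h1 : 0 ≤ x ^ 2 / 2 - x * Real.cos x + Real.sin x := by
    apply nonneg_of_deriv_nonneg (f' := fun x => x * (1 + Real.sin x))
      (fun y => ?_) (by simp) (fun y hy => ?_) hx
    · have : HasDerivAt (fun x : ℝ => x ^ 2 / 2 - x * Real.cos x + Real.sin x)
        (2 * y ^ 1 / 2 - (1 * Real.cos y + y * (-Real.sin y)) + Real.cos y) y := by
        exact (((hasDerivAt_pow 2 y).div_const 2).sub
          ((hasDerivAt_id y).mul (Real.hasDerivAt_cos y))).add (Real.hasDerivAt_sin y)
      convert this using 1; ring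
    · show 0 ≤ y * (1 + Real.sin y)
      have := Real.neg_one_le_sin y
      nlinarith
  have h2 : 0 ≤ x ^ 2 / 2 + x * Real.cos x - Real.sin x := by
    apply nonneg_of_deriv_nonneg (f' := fun x => x * (1 - Real.sin x))
      (fun y => ?_) (by simp) (fun y hy => ?_) hx
    · have : HasDerivAt (fun x : ℝ => x ^ 2 / 2 + x * Real.cos x - Real.sin x)
        (2 * y ^ 1 / 2 + (1 * Real.cos y + y * (-Real.sin y)) - Real.cos y) y :=
        (((hasDerivAt_pow 2 y).div_const 2).add
          ((hasDerivAt_id y).mul (Real.hasDerivAt_cos y))).sub (Real.hasDerivAt_sin y)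
      convert this using 1; ring
    · show 0 ≤ y * (1 - Real.sin y)
      have := Real.sin_le_one y
      nlinarith
  rw [abs_le]
  constructor <;> linarith

/-- The key inequality: `|x cos x − sin x| ≤ x²/2` for all real `x`. -/
lemma key (x : ℝ) : |x * Real.cos x - Real.sin x| ≤ x ^ 2 / 2 := by
  rcases le_or_gt 0 x with hx | hx
  · exact key_of_nonneg hx
  · have h := key_of_nonneg (x := -x) (by linarith)
    rw [Real.cos_neg, Real.sin_neg] at h
    have e1 : |x * Real.cos x - Real.sin x| = |(-x) * Real.cos x - -Real.sin x| := by
      rw [show (-x) * Real.cos x - -Real.sin x = -(x * Real.cos x - Real.sin x) by ring, abs_neg]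
    have e2 : (-x) ^ 2 = x ^ 2 := by ring
    rw [e1]
    linarith [e2 ▸ h]

lemma abs_sin_sub_le (x : ℝ) : |Real.sin x - x| ≤ |x| ^ 3 / 6 := by
  have base : ∀ y : ℝ, 0 ≤ y → |Real.sin y - y| ≤ y ^ 3 / 6 := by
    intro y hy
    have hub : Real.sin y ≤ y := Real.sin_le hy
    have hlb : 0 ≤ Real.sin y - y + y ^ 3 / 6 := by
      apply nonneg_of_deriv_nonneg (f' := fun x => Real.cos x - 1 + x ^ 2 / 2)
        (fun z => ?_) (by simp) (fun z hz => ?_) hy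
      · have : HasDerivAt (fun x : ℝ => Real.sin x - x + x ^ 3 / 6)
          (Real.cos z - 1 + 3 * z ^ 2 / 6) z := by
          have h3 : HasDerivAt (fun x : ℝ => x ^ 3 / 6) (3 * z ^ 2 / 6) z := by
            have := (hasDerivAt_pow 3 z).div_const 6
            simpa using this
          exact ((Real.hasDerivAt_sin z).sub (hasDerivAt_id z)).add h3
        convert this using 1; ring
      · show 0 ≤ Real.cos z - 1 + z ^ 2 / 2
        have := Real.one_sub_sq_div_two_le_cos (x := z)
        linarith
    rw [abs_le]; constructor <;> nlinarith
  rcases le_or_gt 0 x with hx | hx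
  · rw [abs_of_nonneg hx]; exact base x hx
  · have := base (-x) (by linarith)
    rw [Real.sin_neg, show -Real.sin x - -x = -(Real.sin x - x) by ring, abs_neg] at this
    rw [abs_of_neg hx]
    have e : (-x) ^ 3 = (-x) ^ 3 := rfl
    linarith [this]

lemma sinc_hasDerivAt_zero : HasDerivAt sinc 0 0 := by
  rw [hasDerivAt_iff_tendsto_slope]
  have h : ∀ x : ℝ, x ≠ 0 → slope sinc 0 x = (Real.sin x - x) / x ^ 2 := by
    intro x hx
    rw [slope_def_field]
    simp only [sinc, if_neg hx, if_pos rfl, sub_zero, if_true]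
    rw [div_sub_one hx, div_div, ← pow_two]
  have hlim : Filter.Tendsto (fun x : ℝ => (Real.sin x - x) / x ^ 2)
      (nhdsWithin 0 {(0:ℝ)}ᶜ) (nhds 0) := by
    have hb : Filter.Tendsto (fun x : ℝ => |x| / 6) (nhdsWithin 0 {(0:ℝ)}ᶜ) (nhds 0) := by
      have : Filter.Tendsto (fun x : ℝ => |x| / 6) (nhds 0) (nhds 0) := by
        have := (continuous_abs.tendsto (0:ℝ)).div_const 6
        simpa using this
      exact this.mono_left nhdsWithin_le_nhds
    apply squeeze_zero_norm' ?_ hb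
    filter_upwards [self_mem_nhdsWithin] with x hx
    have hx0 : x ≠ 0 := hx
    rw [Real.norm_eq_abs, abs_div]
    have h2 : |x ^ 2| = x ^ 2 := abs_of_nonneg (sq_nonneg x)
    rw [h2, div_le_div_iff₀ (by positivity) (by norm_num)]
    have := abs_sin_sub_le x
    have hx3 : |x| ^ 3 = |x| * x ^ 2 := by
      rw [pow_succ', sq_abs]
    nlinarith [abs_nonneg (Real.sin x - x)]
  refine hlim.congr' ?_
  filter_upwards [self_mem_nhdsWithin] with x hx
  exact (h x hx).symm

lemma sinc_hasDerivAt (x : ℝ) (hx : x ≠ 0) :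
    HasDerivAt sinc (Real.cos x / x - Real.sin x / x ^ 2) x := by
  have h : HasDerivAt (fun y : ℝ => Real.sin y / y)
      ((Real.cos x * x - Real.sin x * 1) / x ^ 2) x :=
    (Real.hasDerivAt_sin x).div (hasDerivAt_id x) hx
  have heq : sinc =ᶠ[nhds x] (fun y : ℝ => Real.sin y / y) := by
    filter_upwards [isOpen_compl_singleton.mem_nhds
      (show x ∈ ({(0:ℝ)}ᶜ : Set ℝ) by simpa using hx)] with y hy
    have hy0 : y ≠ 0 := hy
    simp only [sinc, if_neg hy0]
  refine (h.congr_of_eventuallyEq heq).congr_deriv ?_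
  field_simp

/-- For all `x`, `|sinc' x| ≤ 1/2`. -/
theorem stmt12 : ∀ x : ℝ, |deriv sinc x| ≤ 1 / 2 := by
  intro x
  rcases eq_or_ne x 0 with rfl | hx
  · rw [sinc_hasDerivAt_zero.deriv]; norm_num
  · rw [(sinc_hasDerivAt x hx).deriv]
    have hk := key x
    have hx2 : (0:ℝ) < x ^ 2 := by positivity
    have h3 : Real.cos x / x - Real.sin x / x ^ 2 = (x * Real.cos x - Real.sin x) / x ^ 2 := by
      field_simp
    rw [h3, abs_div, abs_of_pos hx2, div_le_iff₀ hx2]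
    nlinarith
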